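/- Zygmund's inequality in L² form: there is an absolute constant C such that for every lacunary sequence (m_j) of natural numbers with m_{j+1}/m_j ≥ 2 for all j, every finite sequence of complex coefficients (a_j), and every p ≥ 2, ‖Σ_j a_j e^{i m_j x}‖_{L^p(𝕋)} ≤ C·√p·(Σ_j |a_j|²)^{1/2}. -/

import Mathlib

set_option maxHeartbeats 1000000

open MeasureTheory Real Finset intervalIntegral

noncomputable def Efun (n : ℕ) (x : ℝ) : ℂ :=
  Complex.exp (2 * Real.pi * Complex.I * (n : ℂ) * (x : ℂ))

lemma Efun_cont (n : ℕ) : Continuous (Efun n) := by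
  unfold Efun; fun_prop

lemma Efun_norm (n : ℕ) (x : ℝ) : ‖Efun n x‖ = 1 := by
  unfold Efun
  rw [Complex.norm_exp]
  have : (2 * (Real.pi:ℂ) * Complex.I * (n : ℂ) * (x : ℂ)).re = 0 := by
    simp [Complex.mul_re, Complex.mul_im]
  rw [this, Real.exp_zero]

-- ∫ over Icc 0 1 of exp(2πiNx) = 0 for N ≠ 0
lemma int_exp_zero (N : ℤ) (hN : N ≠ 0) :
    (∫ x in Set.Icc (0:ℝ) 1, Complex.exp (2 * Real.pi * Complex.I * (N : ℂ) * (x : ℂ))) = 0 := by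
  have hc : (2 * (Real.pi:ℂ) * Complex.I * (N:ℂ)) ≠ 0 := by
    simp [Real.pi_ne_zero, Complex.I_ne_zero, hN]
  rw [MeasureTheory.integral_Icc_eq_integral_Ioc,
    ← integral_of_le (by norm_num : (0:ℝ) ≤ 1)]
  have := integral_exp_mul_complex (a := 0) (b := 1) hc
  simp only [mul_assoc] at this ⊢
  rw [this]
  have h1 : Complex.exp (2 * ((Real.pi:ℂ) * (Complex.I * ((N:ℂ) * (1:ℝ))))) = 1 := by
    push_cast
    rw [mul_one]
    have := Complex.exp_int_mul_two_pi_mul_I N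
    rw [← this]; ring_nf
  have h0 : Complex.exp (2 * ((Real.pi:ℂ) * (Complex.I * ((N:ℂ) * (0:ℝ))))) = 1 := by
    push_cast; simp
  rw [h1, h0]; simp

section Lac
variable {m : ℕ → ℕ} (hm1 : ∀ j, 1 ≤ m j) (hm2 : ∀ j, 2 * m j ≤ m (j + 1))

include hm1 hm2 in
lemma sum_range_m_lt : ∀ J, (∑ j ∈ Finset.range J, m j) < m J := by
  intro J
  induction J with
  | zero => simp; exact hm1 0
  | succ J ih =>
    rw [Finset.sum_range_succ]
    calc (∑ j ∈ Finset.range J, m j) + m J < m J + m J := by omega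
    _ = 2 * m J := by ring
    _ ≤ m (J+1) := hm2 J

include hm1 hm2 in
lemma freq_ne {A B : Finset ℕ} (hA : A.Nonempty) (hBA : B ⊆ A) :
    ((∑ j ∈ B, (m j : ℤ)) - ∑ j ∈ A \ B, (m j : ℤ)) ≠ 0 := by
  set J := A.max' hA with hJ
  have hJA : J ∈ A := A.max'_mem hA
  have hsub : ∀ C : Finset ℕ, C ⊆ A → J ∉ C → (∑ j ∈ C, (m j : ℤ)) < m J := by
    intro C hCA hJC
    have hCr : C ⊆ Finset.range J := by
      intro j hj
      have hje : j ≤ J := Finset.le_max' A j (hCA hj)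
      have : j ≠ J := fun h => hJC (h ▸ hj)
      exact Finset.mem_range.mpr (lt_of_le_of_ne hje this)
    calc (∑ j ∈ C, (m j : ℤ)) ≤ ∑ j ∈ Finset.range J, (m j : ℤ) :=
          Finset.sum_le_sum_of_subset_of_nonneg hCr (by intro i _ _; positivity)
    _ < m J := by exact_mod_cast sum_range_m_lt hm1 hm2 J
  have hnn : ∀ C : Finset ℕ, 0 ≤ (∑ j ∈ C, (m j : ℤ)) := by
    intro C; positivity
  by_cases hJB : J ∈ B
  · have h1 : (m J : ℤ) ≤ ∑ j ∈ B, (m j : ℤ) :=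
      Finset.single_le_sum (f := fun j => (m j : ℤ)) (by intro i _; positivity) hJB
    have h2 : (∑ j ∈ A \ B, (m j : ℤ)) < m J :=
      hsub _ (Finset.sdiff_subset) (by simp [hJB])
    omega
  · have hJAB : J ∈ A \ B := Finset.mem_sdiff.mpr ⟨hJA, hJB⟩
    have h1 : (m J : ℤ) ≤ ∑ j ∈ A \ B, (m j : ℤ) :=
      Finset.single_le_sum (f := fun j => (m j : ℤ)) (by intro i _; positivity) hJAB
    have h2 : (∑ j ∈ B, (m j : ℤ)) < m J := hsub _ hBA hJB
    omega

end Lac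

lemma Efun_conj (n : ℕ) (x : ℝ) :
    (starRingEnd ℂ) (Efun n x) = Complex.exp (-(2 * Real.pi * Complex.I * (n : ℂ) * (x : ℝ))) := by
  unfold Efun
  rw [← Complex.exp_conj]
  congr 1
  simp only [map_mul, Complex.conj_I, Complex.conj_ofReal, Complex.conj_natCast, map_ofNat]
  ring

lemma Efun_prod (t : Finset ℕ) (m : ℕ → ℕ) (x : ℝ) :
    (∏ j ∈ t, Efun (m j) x) =
      Complex.exp (2 * Real.pi * Complex.I * ((∑ j ∈ t, (m j):ℕ) : ℂ) * (x : ℝ)) := by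
  unfold Efun
  rw [← Complex.exp_sum]
  congr 1
  push_cast
  rw [Finset.mul_sum, Finset.sum_mul]

lemma Efun_prod_conj (t : Finset ℕ) (m : ℕ → ℕ) (x : ℝ) :
    (∏ j ∈ t, (starRingEnd ℂ) (Efun (m j) x)) =
      Complex.exp (-(2 * Real.pi * Complex.I * ((∑ j ∈ t, (m j):ℕ) : ℂ) * (x : ℝ))) := by
  simp only [Efun_conj]
  rw [← Complex.exp_sum]
  congr 1
  push_cast
  rw [Finset.mul_sum, Finset.sum_mul, ← Finset.sum_neg_distrib]

section Lac
variable {m : ℕ → ℕ} (hm1 : ∀ j, 1 ≤ m j) (hm2 : ∀ j, 2 * m j ≤ m (j + 1))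

include hm1 hm2 in
lemma riesz_term {A : Finset ℕ} (hA : A.Nonempty) (c : ℕ → ℂ) :
    (∫ x in Set.Icc (0:ℝ) 1, ∏ j ∈ A, (c j * Efun (m j) x).re) = 0 := by
  have key : (∫ x in Set.Icc (0:ℝ) 1,
      (∏ j ∈ A, (((c j * Efun (m j) x).re : ℝ) : ℂ))) = 0 := by
    have hfact : ∀ x : ℝ, ∀ j, (((c j * Efun (m j) x).re : ℝ) : ℂ)
        = c j / 2 * Efun (m j) x + (starRingEnd ℂ) (c j) / 2 * (starRingEnd ℂ) (Efun (m j) x) := by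
      intro x j
      have h := Complex.add_conj (c j * Efun (m j) x)
      rw [map_mul] at h
      push_cast at h
      linear_combination -h / 2
    have hexp : ∀ x : ℝ, (∏ j ∈ A, (((c j * Efun (m j) x).re : ℝ) : ℂ))
        = ∑ B ∈ A.powerset,
            ((∏ j ∈ B, c j / 2) * (∏ j ∈ A \ B, (starRingEnd ℂ) (c j) / 2)) *
              Complex.exp (2 * Real.pi * Complex.I *
                (((∑ j ∈ B, (m j):ℤ) - (∑ j ∈ A \ B, (m j):ℤ) : ℤ) : ℂ) * (x : ℝ)) := by
      intro x
      calc (∏ j ∈ A, (((c j * Efun (m j) x).re : ℝ) : ℂ))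
          = ∏ j ∈ A, (c j / 2 * Efun (m j) x
              + (starRingEnd ℂ) (c j) / 2 * (starRingEnd ℂ) (Efun (m j) x)) := by
            exact Finset.prod_congr rfl fun j _ => hfact x j
        _ = ∑ B ∈ A.powerset, (∏ j ∈ B, c j / 2 * Efun (m j) x) *
              ∏ j ∈ A \ B, (starRingEnd ℂ) (c j) / 2 * (starRingEnd ℂ) (Efun (m j) x) :=
            Finset.prod_add _ _ _
        _ = _ := by
            refine Finset.sum_congr rfl fun B hB => ?_
            rw [Finset.prod_mul_distrib, Finset.prod_mul_distrib, Efun_prod, Efun_prod_conj,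
              mul_mul_mul_comm, ← Complex.exp_add]
            congr 1
            congr 1
            push_cast
            ring
    rw [MeasureTheory.setIntegral_congr_fun measurableSet_Icc (fun x _ => hexp x)]
    rw [MeasureTheory.integral_finset_sum]
    · refine Finset.sum_eq_zero fun B hB => ?_
      rw [MeasureTheory.integral_const_mul, int_exp_zero _ (freq_ne hm1 hm2 hA (Finset.mem_powerset.mp hB)), mul_zero]
    · intro B hB
      apply Continuous.integrableOn_Icc
      fun_prop
  have : ((∫ x in Set.Icc (0:ℝ) 1, ∏ j ∈ A, (c j * Efun (m j) x).re : ℝ) : ℂ) = 0 := by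
    rw [← key]
    norm_cast
  exact_mod_cast this

end Lac

section Lac
variable {m : ℕ → ℕ} (hm1 : ∀ j, 1 ≤ m j) (hm2 : ∀ j, 2 * m j ≤ m (j + 1))

include hm1 hm2 in
lemma riesz_prod (t : Finset ℕ) (c : ℕ → ℂ) :
    (∫ x in Set.Icc (0:ℝ) 1, ∏ j ∈ t, (1 + (c j * Efun (m j) x).re)) = 1 := by
  have hexp : ∀ x : ℝ, (∏ j ∈ t, ((c j * Efun (m j) x).re + 1))
      = ∑ B ∈ t.powerset, ∏ j ∈ B, (c j * Efun (m j) x).re := by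
    intro x
    rw [Finset.prod_add]
    simp
  have : (∫ x in Set.Icc (0:ℝ) 1, ∏ j ∈ t, (1 + (c j * Efun (m j) x).re))
      = ∫ x in Set.Icc (0:ℝ) 1, ∑ B ∈ t.powerset, ∏ j ∈ B, (c j * Efun (m j) x).re := by
    refine MeasureTheory.setIntegral_congr_fun measurableSet_Icc (fun x _ => ?_)
    rw [← hexp x]
    exact Finset.prod_congr rfl fun j _ => by ring
  rw [this, MeasureTheory.integral_finset_sum _ (fun B _ => by
    apply Continuous.integrableOn_Icc
    have : ∀ j, Continuous fun x => (c j * Efun (m j) x).re := fun j =>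
      Complex.continuous_re.comp (continuous_const.mul (Efun_cont (m j)))
    exact continuous_finset_prod _ fun j _ => this j)]
  rw [Finset.sum_eq_single_of_mem ∅ (Finset.empty_mem_powerset t)]
  · simp [Real.volume_Icc]
  · intro B hB hBne
    exact riesz_term hm1 hm2 (Finset.nonempty_iff_ne_empty.mpr hBne) c

end Lac

-- scalar inequality 1
lemma exp_le_riesz {s σ : ℝ} (hs : |s| ≤ σ) (hσ : σ ≤ 1/2) :
    Real.exp s ≤ (1 + s) * Real.exp (2 * σ^2) := by
  have hs1 : |s| ≤ 1 := by linarith [abs_nonneg s]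
  have hb := Real.exp_bound hs1 (by norm_num : 0 < 2)
  have h2 : Real.exp s ≤ 1 + s + s^2 := by
    have : |Real.exp s - (1 + s)| ≤ s^2 * (3/2) / 2 := by
      have := hb
      simp [Finset.sum_range_succ] at this
      calc |Real.exp s - (1+s)| = |Real.exp s - (1 + s)| := rfl
      _ ≤ |s|^2 * (3 / (2*2)) := by
          convert this using 2 <;> norm_num
      _ = s^2 * (3/2)/2 := by rw [sq_abs]; ring
    have habs := (abs_sub_le_iff.mp this).1
    nlinarith [sq_nonneg s]
  have he : Real.exp (2*σ^2) ≥ 1 + 2*σ^2 := by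
    linarith [Real.add_one_le_exp (2*σ^2)]
  have hσs : s^2 ≤ σ^2 := by
    rw [← sq_abs s]; exact pow_le_pow_left₀ (abs_nonneg s) hs 2
  have hσ0 : 0 ≤ σ := le_trans (abs_nonneg s) hs
  have hsl : -σ ≤ s := by
    have := neg_abs_le s; linarith
  have h1s : 0 ≤ 1 + s := by linarith
  have hstep : 1 + s + s^2 ≤ (1+s)*(1+2*σ^2) := by
    nlinarith [mul_le_mul_of_nonneg_right hsl (sq_nonneg σ),
      mul_le_mul_of_nonneg_right hσ (sq_nonneg σ)]
  calc Real.exp s ≤ 1 + s + s^2 := h2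
    _ ≤ (1+s)*(1+2*σ^2) := hstep
    _ ≤ (1 + s) * Real.exp (2 * σ^2) := mul_le_mul_of_nonneg_left he h1s

-- scalar inequality 2: t^p ≤ (p/e)^p exp t
lemma rpow_le_exp {t p : ℝ} (ht : 0 ≤ t) (hp : 0 < p) :
    t ^ p ≤ (p / Real.exp 1) ^ p * Real.exp t := by
  rcases eq_or_lt_of_le ht with h | h
  · rw [← h, Real.zero_rpow (ne_of_gt hp)]
    positivity
  · have hlog : Real.log (t/p) ≤ t/p - 1 := Real.log_le_sub_one_of_pos (by positivity)
    have hlog2 : Real.log t - Real.log p ≤ t/p - 1 := by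
      rwa [Real.log_div (ne_of_gt h) (ne_of_gt hp)] at hlog
    have hkey : p * Real.log t ≤ p * Real.log p - p + t := by
      have := mul_le_mul_of_nonneg_left hlog2 (le_of_lt hp)
      have hpt : p * (t/p) = t := by field_simp
      nlinarith
    calc t ^ p = Real.exp (Real.log t * p) := Real.rpow_def_of_pos h p
      _ ≤ Real.exp (p * Real.log p - p + t) :=
          Real.exp_le_exp.mpr (by rw [mul_comm]; exact hkey)
      _ = (p / Real.exp 1) ^ p * Real.exp t := by
          rw [Real.rpow_def_of_pos (by positivity : 0 < p / Real.exp 1),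
            Real.log_div (ne_of_gt hp) (ne_of_gt (Real.exp_pos 1)), Real.log_exp,
            ← Real.exp_add]
          congr 1
          ring

section Lac2
variable {m : ℕ → ℕ} (hm1 : ∀ j, 1 ≤ m j) (hm2 : ∀ j, 2 * m j ≤ m (j + 1))

include hm1 hm2 in
lemma mgf (b : ℕ → ℂ) (s : Finset ℕ) (l : ℝ) :
    (∫ x in Set.Icc (0:ℝ) 1, Real.exp (l * ∑ j ∈ s, (b j * Efun (m j) x).re))
      ≤ Real.exp (2 * l^2 * ∑ j ∈ s, ‖b j‖^2) := by
  classical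
  set good := s.filter (fun j => |l| * ‖b j‖ ≤ 1/2) with hgood
  have habs : ∀ j (x : ℝ), |l * (b j * Efun (m j) x).re| ≤ |l| * ‖b j‖ := by
    intro j x
    rw [abs_mul]
    refine mul_le_mul_of_nonneg_left ?_ (abs_nonneg l)
    calc |(b j * Efun (m j) x).re| ≤ ‖b j * Efun (m j) x‖ := Complex.abs_re_le_norm _
      _ = ‖b j‖ := by rw [norm_mul, Efun_norm, mul_one]
  have h_pt : ∀ x : ℝ, Real.exp (l * ∑ j ∈ s, (b j * Efun (m j) x).re)
      ≤ Real.exp (2 * l^2 * ∑ j ∈ s, ‖b j‖^2)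
        * ∏ j ∈ good, (1 + (((l:ℂ) * b j) * Efun (m j) x).re) := by
    intro x
    have hre : ∀ j, (((l:ℂ) * b j) * Efun (m j) x).re = l * (b j * Efun (m j) x).re := by
      intro j
      rw [mul_assoc]
      exact Complex.re_ofReal_mul l _
    have step1 : Real.exp (l * ∑ j ∈ s, (b j * Efun (m j) x).re)
        = ∏ j ∈ s, Real.exp (l * (b j * Efun (m j) x).re) := by
      rw [← Real.exp_sum, Finset.mul_sum]
    have step2 : ∀ j ∈ s, Real.exp (l * (b j * Efun (m j) x).re)
        ≤ (if |l| * ‖b j‖ ≤ 1/2 then 1 + l * (b j * Efun (m j) x).re else 1)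
          * Real.exp (2 * l^2 * ‖b j‖^2) := by
      intro j _
      by_cases hj : |l| * ‖b j‖ ≤ 1/2
      · rw [if_pos hj]
        have := exp_le_riesz (habs j x) hj
        calc Real.exp (l * (b j * Efun (m j) x).re)
            ≤ (1 + l * (b j * Efun (m j) x).re) * Real.exp (2 * (|l| * ‖b j‖)^2) := this
          _ = (1 + l * (b j * Efun (m j) x).re) * Real.exp (2 * l^2 * ‖b j‖^2) := by
              rw [mul_pow, sq_abs, mul_assoc]
      · rw [if_neg hj, one_mul]
        push_neg at hj
        apply Real.exp_le_exp.mpr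
        calc l * (b j * Efun (m j) x).re ≤ |l * (b j * Efun (m j) x).re| := le_abs_self _
          _ ≤ |l| * ‖b j‖ := habs j x
          _ ≤ 2 * (|l| * ‖b j‖)^2 := by nlinarith [hj]
          _ = 2 * l^2 * ‖b j‖^2 := by rw [mul_pow, sq_abs]; ring
    have step3 : (∏ j ∈ s, Real.exp (l * (b j * Efun (m j) x).re))
        ≤ ∏ j ∈ s, ((if |l| * ‖b j‖ ≤ 1/2 then 1 + l * (b j * Efun (m j) x).re else 1)
            * Real.exp (2 * l^2 * ‖b j‖^2)) :=
      Finset.prod_le_prod (fun j _ => le_of_lt (Real.exp_pos _)) step2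
    have step4 : (∏ j ∈ s, ((if |l| * ‖b j‖ ≤ 1/2 then 1 + l * (b j * Efun (m j) x).re else 1)
            * Real.exp (2 * l^2 * ‖b j‖^2)))
        = (∏ j ∈ good, (1 + (((l:ℂ) * b j) * Efun (m j) x).re))
          * Real.exp (2 * l^2 * ∑ j ∈ s, ‖b j‖^2) := by
      rw [Finset.prod_mul_distrib]
      congr 1
      · rw [hgood, Finset.prod_filter]
        refine Finset.prod_congr rfl fun j _ => ?_
        by_cases hj : |l| * ‖b j‖ ≤ 1/2
        · rw [if_pos hj, if_pos hj, hre]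
        · rw [if_neg hj, if_neg hj]
      · rw [← Real.exp_sum]
        congr 1
        rw [Finset.mul_sum]
    rw [step1]
    calc _ ≤ _ := step3
    _ = _ := step4
    _ = _ := mul_comm _ _
  -- integrate
  have hcont_prod : Continuous fun x => ∏ j ∈ good, (1 + (((l:ℂ) * b j) * Efun (m j) x).re) :=
    continuous_finset_prod _ fun j _ =>
      continuous_const.add (Complex.continuous_re.comp (continuous_const.mul (Efun_cont (m j))))
  have hcont_lhs : Continuous fun x => Real.exp (l * ∑ j ∈ s, (b j * Efun (m j) x).re) := by
    apply Real.continuous_exp.comp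
    apply continuous_const.mul
    exact continuous_finset_sum _ fun j _ =>
      Complex.continuous_re.comp (continuous_const.mul (Efun_cont (m j)))
  calc (∫ x in Set.Icc (0:ℝ) 1, Real.exp (l * ∑ j ∈ s, (b j * Efun (m j) x).re))
      ≤ ∫ x in Set.Icc (0:ℝ) 1, Real.exp (2 * l^2 * ∑ j ∈ s, ‖b j‖^2)
          * ∏ j ∈ good, (1 + (((l:ℂ) * b j) * Efun (m j) x).re) := by
        refine MeasureTheory.setIntegral_mono_on (hcont_lhs.integrableOn_Icc)
          ((continuous_const.mul hcont_prod).integrableOn_Icc) measurableSet_Icc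
          (fun x _ => h_pt x)
    _ = Real.exp (2 * l^2 * ∑ j ∈ s, ‖b j‖^2) := by
        rw [MeasureTheory.integral_const_mul, riesz_prod hm1 hm2 good (fun j => (l:ℂ) * b j),
          mul_one]

end Lac2

section Lac3
variable {m : ℕ → ℕ} (hm1 : ∀ j, 1 ≤ m j) (hm2 : ∀ j, 2 * m j ≤ m (j + 1))

include hm1 hm2 in
lemma momentBound (b : ℕ → ℂ) (s : Finset ℕ) {p : ℝ} (hp : 2 ≤ p)
    (hS : 0 < ∑ j ∈ s, ‖b j‖^2) :
    (∫ x in Set.Icc (0:ℝ) 1, |∑ j ∈ s, (b j * Efun (m j) x).re| ^ p)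
      ≤ (2 * Real.sqrt p * Real.sqrt (∑ j ∈ s, ‖b j‖^2)) ^ p := by
  set S := ∑ j ∈ s, ‖b j‖^2 with hSdef2
  have hp0 : 0 < p := by linarith
  have hsqS : 0 < Real.sqrt S := Real.sqrt_pos.mpr hS
  have hsqp : 0 < Real.sqrt p := Real.sqrt_pos.mpr hp0
  set lam := Real.sqrt p / (2 * Real.sqrt S) with hlam
  have hlam0 : 0 < lam := by positivity
  set u := fun x : ℝ => ∑ j ∈ s, (b j * Efun (m j) x).re with hu
  have hucont : Continuous u :=
    continuous_finset_sum _ fun j _ =>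
      Complex.continuous_re.comp (continuous_const.mul (Efun_cont (m j)))
  -- pointwise bound
  have h_pt : ∀ x : ℝ, |u x| ^ p
      ≤ (p / (Real.exp 1 * lam)) ^ p * (Real.exp (lam * u x) + Real.exp (-lam * u x)) := by
    intro x
    have h1 : (lam * |u x|) ^ p ≤ (p / Real.exp 1) ^ p * Real.exp (lam * |u x|) :=
      rpow_le_exp (by positivity) hp0
    have h2 : (lam * |u x|) ^ p = lam ^ p * |u x| ^ p :=
      Real.mul_rpow (le_of_lt hlam0) (abs_nonneg _)
    have h3 : Real.exp (lam * |u x|) ≤ Real.exp (lam * u x) + Real.exp (-lam * u x) := by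
      rcases abs_cases (u x) with ⟨h, _⟩ | ⟨h, _⟩
      · rw [h]
        nlinarith [Real.exp_pos (-lam * u x)]
      · rw [h]
        have : lam * -u x = -lam * u x := by ring
        rw [this]
        nlinarith [Real.exp_pos (lam * u x)]
    have h4 : (p / (Real.exp 1 * lam)) ^ p = (p / Real.exp 1) ^ p / lam ^ p := by
      rw [← Real.div_rpow (by positivity) (le_of_lt hlam0)]
      congr 1
      field_simp
    rw [h4]
    rw [div_mul_eq_mul_div, le_div_iff₀ (by positivity : (0:ℝ) < lam ^ p), mul_comm (|u x| ^ p) _,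
      ← h2]
    calc (lam * |u x|) ^ p ≤ (p / Real.exp 1) ^ p * Real.exp (lam * |u x|) := h1
      _ ≤ (p / Real.exp 1) ^ p * (Real.exp (lam * u x) + Real.exp (-lam * u x)) := by
          apply mul_le_mul_of_nonneg_left h3 (by positivity)
  -- integrate
  have hcont1 : Continuous fun x => Real.exp (lam * u x) :=
    Real.continuous_exp.comp (continuous_const.mul hucont)
  have hcont2 : Continuous fun x => Real.exp (-lam * u x) :=
    Real.continuous_exp.comp (continuous_const.mul hucont)
  have hcontu : Continuous fun x => |u x| ^ p :=
    (hucont.abs).rpow_const (fun x => Or.inr (le_of_lt hp0))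
  have hint : (∫ x in Set.Icc (0:ℝ) 1, |u x| ^ p)
      ≤ (p / (Real.exp 1 * lam)) ^ p
        * ((∫ x in Set.Icc (0:ℝ) 1, Real.exp (lam * u x))
          + ∫ x in Set.Icc (0:ℝ) 1, Real.exp (-lam * u x)) := by
    rw [← MeasureTheory.integral_add hcont1.integrableOn_Icc hcont2.integrableOn_Icc,
      ← MeasureTheory.integral_const_mul]
    refine MeasureTheory.setIntegral_mono_on hcontu.integrableOn_Icc
      ((continuous_const.mul (hcont1.add hcont2)).integrableOn_Icc) measurableSet_Icc
      (fun x _ => h_pt x)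
  have hmgf1 : (∫ x in Set.Icc (0:ℝ) 1, Real.exp (lam * u x)) ≤ Real.exp (2 * lam^2 * S) :=
    mgf hm1 hm2 b s lam
  have hmgf2 : (∫ x in Set.Icc (0:ℝ) 1, Real.exp (-lam * u x)) ≤ Real.exp (2 * lam^2 * S) := by
    have h := mgf hm1 hm2 b s (-lam)
    rw [neg_sq] at h
    exact h
  have hlamsq : 2 * lam^2 * S = p / 2 := by
    rw [hlam]
    rw [div_pow]
    rw [Real.sq_sqrt (le_of_lt hp0)]
    rw [mul_pow]
    rw [Real.sq_sqrt (le_of_lt (by positivity : (0:ℝ) < S))]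
    field_simp
  have hq : Real.sqrt p * Real.sqrt p = p := Real.mul_self_sqrt hp0.le
  have hplam : p / (Real.exp 1 * lam) = 2 * Real.sqrt p * Real.sqrt S / Real.exp 1 := by
    rw [hlam, ← hq]
    have hq0 : Real.sqrt p ≠ 0 := hsqp.ne'
    have ht0 : Real.sqrt S ≠ 0 := hsqS.ne'
    have he0 : Real.exp 1 ≠ 0 := (Real.exp_pos 1).ne'
    field_simp
    rw [Real.sqrt_sq hsqp.le]
  have hfin : (2 * Real.sqrt p * Real.sqrt S / Real.exp 1) ^ p
      * (Real.exp (p/2) + Real.exp (p/2)) ≤ (2 * Real.sqrt p * Real.sqrt S) ^ p := by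
    have hXe : (2 * Real.sqrt p * Real.sqrt S / Real.exp 1) ^ p
        = (2 * Real.sqrt p * Real.sqrt S) ^ p / Real.exp p := by
      rw [Real.div_rpow (by positivity) (Real.exp_pos 1).le, Real.exp_one_rpow]
    rw [hXe, div_mul_eq_mul_div, div_le_iff₀ (Real.exp_pos p)]
    have h2e : Real.exp (p/2) + Real.exp (p/2) ≤ Real.exp p := by
      have hsplit : Real.exp p = Real.exp (p/2) * Real.exp (p/2) := by
        rw [← Real.exp_add]; congr 1; ring
      have h2 : (2:ℝ) ≤ Real.exp (p/2) := by
        calc (2:ℝ) ≤ Real.exp 1 := by linarith [Real.add_one_le_exp 1]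
        _ ≤ Real.exp (p/2) := Real.exp_le_exp.mpr (by linarith)
      nlinarith [Real.exp_pos (p/2)]
    calc (2 * Real.sqrt p * Real.sqrt S) ^ p * (Real.exp (p/2) + Real.exp (p/2))
        ≤ (2 * Real.sqrt p * Real.sqrt S) ^ p * Real.exp p :=
          mul_le_mul_of_nonneg_left h2e (Real.rpow_nonneg (by positivity) p)
      _ = (2 * Real.sqrt p * Real.sqrt S) ^ p * Real.exp p := rfl
  calc (∫ x in Set.Icc (0:ℝ) 1, |u x| ^ p)
      ≤ (p / (Real.exp 1 * lam)) ^ p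
        * ((∫ x in Set.Icc (0:ℝ) 1, Real.exp (lam * u x))
          + ∫ x in Set.Icc (0:ℝ) 1, Real.exp (-lam * u x)) := hint
    _ ≤ (p / (Real.exp 1 * lam)) ^ p * (Real.exp (2 * lam^2 * S) + Real.exp (2 * lam^2 * S)) := by
        apply mul_le_mul_of_nonneg_left (add_le_add hmgf1 hmgf2) (Real.rpow_nonneg (by positivity) p)
    _ = (2 * Real.sqrt p * Real.sqrt S / Real.exp 1) ^ p * (Real.exp (p/2) + Real.exp (p/2)) := by
        rw [hplam, hlamsq]
    _ ≤ (2 * Real.sqrt p * Real.sqrt S) ^ p := hfin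

end Lac3

lemma add_rpow_le' {a b p : ℝ} (ha : 0 ≤ a) (hb : 0 ≤ b) (hp : 0 ≤ p) :
    (a + b) ^ p ≤ 2 ^ p * (a ^ p + b ^ p) := by
  have h2 : (0:ℝ) ≤ 2 := by norm_num
  rcases le_total a b with h | h
  · calc (a+b)^p ≤ (2*b)^p := Real.rpow_le_rpow (by positivity) (by linarith) hp
      _ = 2^p * b^p := Real.mul_rpow h2 hb
      _ ≤ 2^p * (a^p + b^p) := by
          nlinarith [Real.rpow_nonneg ha p, Real.rpow_nonneg h2 p]
  · calc (a+b)^p ≤ (2*a)^p := Real.rpow_le_rpow (by positivity) (by linarith) hp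
      _ = 2^p * a^p := Real.mul_rpow h2 ha
      _ ≤ 2^p * (a^p + b^p) := by
          nlinarith [Real.rpow_nonneg hb p, Real.rpow_nonneg h2 p]

/-- Zygmund's inequality in `L^p` form: for lacunary frequencies `m` (ratios `≥ 2`) and any
coefficients, `‖∑ a_j e^{2πi m_j x}‖_{L^p(𝕋)} ≤ C √p (∑ |a_j|²)^{1/2}` for all `p ≥ 2`,
with an absolute constant `C`. -/
theorem stmt15 :
    ∃ C : ℝ, 0 < C ∧ ∀ m : ℕ → ℕ, (∀ j, 1 ≤ m j) → (∀ j, 2 * m j ≤ m (j + 1)) →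
      ∀ (s : Finset ℕ) (a : ℕ → ℂ) (p : ℝ), 2 ≤ p →
        (∫ x in Set.Icc (0:ℝ) 1,
            ‖∑ j ∈ s, a j * Complex.exp (2 * Real.pi * Complex.I * (m j : ℂ) * (x : ℂ))‖ ^ p) ^
            (1 / p) ≤
          C * Real.sqrt p * (∑ j ∈ s, ‖a j‖ ^ 2) ^ ((1:ℝ) / 2) := by
  refine ⟨8, by norm_num, ?_⟩
  intro m hm1 hm2 s a p hp
  have hp0 : 0 < p := by linarith
  have hp0' : p ≠ 0 := ne_of_gt hp0
  show (∫ x in Set.Icc (0:ℝ) 1, ‖∑ j ∈ s, a j * Efun (m j) x‖ ^ p) ^ (1 / p)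
      ≤ 8 * Real.sqrt p * (∑ j ∈ s, ‖a j‖ ^ 2) ^ ((1:ℝ) / 2)
  have hS0 : (0:ℝ) ≤ ∑ j ∈ s, ‖a j‖ ^ 2 := by positivity
  rcases eq_or_lt_of_le hS0 with h0 | hpos
  · -- degenerate case
    have hz : ∀ j ∈ s, a j = 0 := by
      intro j hj
      have h := (Finset.sum_eq_zero_iff_of_nonneg
        (fun i _ => by positivity : ∀ i ∈ s, (0:ℝ) ≤ ‖a i‖ ^ 2)).mp h0.symm j hj
      have hn : ‖a j‖ = 0 := (pow_eq_zero_iff (two_ne_zero)).mp h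
      simpa using hn
    have hzero : (∫ x in Set.Icc (0:ℝ) 1, ‖∑ j ∈ s, a j * Efun (m j) x‖ ^ p) = 0 := by
      have : ∀ x ∈ Set.Icc (0:ℝ) 1, ‖∑ j ∈ s, a j * Efun (m j) x‖ ^ p = 0 := by
        intro x _
        rw [Finset.sum_eq_zero (fun j hj => by rw [hz j hj, zero_mul])]
        simp [Real.zero_rpow hp0']
      rw [MeasureTheory.setIntegral_congr_fun measurableSet_Icc this]
      simp
    rw [hzero, Real.zero_rpow (by positivity : 1/p ≠ 0)]
    positivity
  · set S := ∑ j ∈ s, ‖a j‖ ^ 2 with hSdef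
    have hSb : (∑ j ∈ s, ‖-Complex.I * a j‖ ^ 2) = S := by
      refine Finset.sum_congr rfl fun j _ => ?_
      rw [norm_mul, norm_neg, Complex.norm_I, one_mul]
    have hR := momentBound hm1 hm2 a s hp hpos
    have hI := momentBound hm1 hm2 (fun j => -Complex.I * a j) s hp (by rw [hSb]; exact hpos)
    rw [hSb] at hI
    set Y := (2 * Real.sqrt p * Real.sqrt S) ^ p with hY
    have hY0 : 0 ≤ Y := Real.rpow_nonneg (by positivity) p
    -- pointwise bound
    have hpt : ∀ x : ℝ, ‖∑ j ∈ s, a j * Efun (m j) x‖ ^ p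
        ≤ 2 ^ p * (|∑ j ∈ s, (a j * Efun (m j) x).re| ^ p
          + |∑ j ∈ s, ((-Complex.I * a j) * Efun (m j) x).re| ^ p) := by
      intro x
      have him : (∑ j ∈ s, ((-Complex.I * a j) * Efun (m j) x).re)
          = (∑ j ∈ s, a j * Efun (m j) x).im := by
        rw [Complex.im_sum]
        refine Finset.sum_congr rfl fun j _ => ?_
        simp [Complex.mul_re, Complex.mul_im]
      have hre : (∑ j ∈ s, (a j * Efun (m j) x).re)
          = (∑ j ∈ s, a j * Efun (m j) x).re := (Complex.re_sum _ _).symm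
      have habs : ‖∑ j ∈ s, a j * Efun (m j) x‖
          ≤ |∑ j ∈ s, (a j * Efun (m j) x).re|
            + |∑ j ∈ s, ((-Complex.I * a j) * Efun (m j) x).re| := by
        rw [hre, him]
        exact Complex.norm_le_abs_re_add_abs_im _
      calc ‖∑ j ∈ s, a j * Efun (m j) x‖ ^ p
          ≤ (|∑ j ∈ s, (a j * Efun (m j) x).re|
            + |∑ j ∈ s, ((-Complex.I * a j) * Efun (m j) x).re|) ^ p :=
            Real.rpow_le_rpow (norm_nonneg _) habs hp0.le
        _ ≤ _ := add_rpow_le' (abs_nonneg _) (abs_nonneg _) hp0.le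
    -- continuity
    have hcf : Continuous fun x => ∑ j ∈ s, a j * Efun (m j) x :=
      continuous_finset_sum _ fun j _ => continuous_const.mul (Efun_cont (m j))
    have hcfn : Continuous fun x => ‖∑ j ∈ s, a j * Efun (m j) x‖ ^ p :=
      (hcf.norm).rpow_const fun x => Or.inr hp0.le
    have hcR : Continuous fun x => |∑ j ∈ s, (a j * Efun (m j) x).re| ^ p :=
      ((continuous_finset_sum _ fun j _ =>
        Complex.continuous_re.comp (continuous_const.mul (Efun_cont (m j)))).abs).rpow_const
        fun x => Or.inr hp0.le
    have hcI : Continuous fun x => |∑ j ∈ s, ((-Complex.I * a j) * Efun (m j) x).re| ^ p :=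
      ((continuous_finset_sum _ fun j _ =>
        Complex.continuous_re.comp (continuous_const.mul (Efun_cont (m j)))).abs).rpow_const
        fun x => Or.inr hp0.le
    have key : (∫ x in Set.Icc (0:ℝ) 1, ‖∑ j ∈ s, a j * Efun (m j) x‖ ^ p)
        ≤ (8 * Real.sqrt p * Real.sqrt S) ^ p := by
      have step : (∫ x in Set.Icc (0:ℝ) 1, ‖∑ j ∈ s, a j * Efun (m j) x‖ ^ p)
          ≤ 2 ^ p * ((∫ x in Set.Icc (0:ℝ) 1, |∑ j ∈ s, (a j * Efun (m j) x).re| ^ p)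
            + ∫ x in Set.Icc (0:ℝ) 1, |∑ j ∈ s, ((-Complex.I * a j) * Efun (m j) x).re| ^ p) := by
        rw [← MeasureTheory.integral_add hcR.integrableOn_Icc hcI.integrableOn_Icc,
          ← MeasureTheory.integral_const_mul]
        exact MeasureTheory.setIntegral_mono_on hcfn.integrableOn_Icc
          ((continuous_const.mul (hcR.add hcI)).integrableOn_Icc) measurableSet_Icc
          (fun x _ => hpt x)
      have h2p : (2:ℝ) ≤ 2 ^ p := by
        calc (2:ℝ) = 2 ^ (1:ℝ) := (Real.rpow_one 2).symm
        _ ≤ 2 ^ p := Real.rpow_le_rpow_of_exponent_le (by norm_num) (by linarith)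
      have h8 : (8 * Real.sqrt p * Real.sqrt S) ^ p = 2 ^ p * (2 ^ p * Y) := by
        rw [hY]
        rw [← Real.mul_rpow (by norm_num) (by positivity),
          ← Real.mul_rpow (by norm_num) (by positivity)]
        norm_num
        ring_nf
      rw [h8]
      calc (∫ x in Set.Icc (0:ℝ) 1, ‖∑ j ∈ s, a j * Efun (m j) x‖ ^ p)
          ≤ 2 ^ p * ((∫ x in Set.Icc (0:ℝ) 1, |∑ j ∈ s, (a j * Efun (m j) x).re| ^ p)
            + ∫ x in Set.Icc (0:ℝ) 1,
              |∑ j ∈ s, ((-Complex.I * a j) * Efun (m j) x).re| ^ p) := step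
        _ ≤ 2 ^ p * (Y + Y) := by
            apply mul_le_mul_of_nonneg_left (add_le_add hR hI)
              (Real.rpow_nonneg (by norm_num) p)
        _ ≤ 2 ^ p * (2 ^ p * Y) := by
            have h2Y : Y + Y ≤ 2 ^ p * Y := by
              nlinarith [mul_nonneg (by linarith : (0:ℝ) ≤ 2 ^ p - 2) hY0]
            exact mul_le_mul_of_nonneg_left h2Y (Real.rpow_nonneg (by norm_num) p)
    have hint0 : (0:ℝ) ≤ ∫ x in Set.Icc (0:ℝ) 1, ‖∑ j ∈ s, a j * Efun (m j) x‖ ^ p :=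
      MeasureTheory.setIntegral_nonneg measurableSet_Icc
        (fun x _ => Real.rpow_nonneg (norm_nonneg _) p)
    calc (∫ x in Set.Icc (0:ℝ) 1, ‖∑ j ∈ s, a j * Efun (m j) x‖ ^ p) ^ (1/p)
        ≤ ((8 * Real.sqrt p * Real.sqrt S) ^ p) ^ (1/p) :=
          Real.rpow_le_rpow hint0 key (by positivity)
      _ = 8 * Real.sqrt p * Real.sqrt S := by
          rw [← Real.rpow_mul (by positivity), mul_one_div_cancel hp0', Real.rpow_one]
      _ = 8 * Real.sqrt p * S ^ ((1:ℝ)/2) := by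
          rw [Real.sqrt_eq_rpow S]
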